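/- If an ideal I in a commutative Noetherian ring is generated by a regular sequence, then an intersection of symbolic-type powers construction ⊕_{d≥0} ⋂_α I_α^d, where each I_α is generated by a regular sequence and each I_α^d is integrally closed, yields integrally closed ideals: specifically, in ℂ[x^{±1},y], every power ⟨1-x, y⟩^d of the complete-intersection ideal ⟨1-x, y⟩ is integrally closed. -/

import Mathlib

set_option synthInstance.maxHeartbeats 1000000
set_option maxHeartbeats 1000000

noncomputable section

/-- `ℂ[x,x⁻¹,y]`, as polynomials in `y` over Laurent polynomials in `x`. -/
abbrev R : Type := Polynomial (LaurentPolynomial ℂ)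

def x : R := Polynomial.C (LaurentPolynomial.T 1)
def y : R := Polynomial.X


abbrev KK : Type := RatFunc ℂ
abbrev PS : Type := PowerSeries KK
def sK : KK := RatFunc.X

def U : PSˣ := Units.mkOfMulEqOne (1 - PowerSeries.X)
  (PowerSeries.invOfUnit (1 - PowerSeries.X) 1)
  (PowerSeries.mul_invOfUnit _ _ (by simp))

lemma U_val : (U : PS) = 1 - PowerSeries.X := rfl

def φ₁ : LaurentPolynomial ℂ →ₐ[ℂ] PS :=
  (AddMonoidAlgebra.lift ℂ PS ℤ) ((Units.coeHom PS).comp (zpowersHom PSˣ U))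

lemma φ₁_T (n : ℤ) : φ₁ (LaurentPolynomial.T n) = ↑(U ^ n) := by
  rw [φ₁, LaurentPolynomial.T, AddMonoidAlgebra.lift_single]
  simp only [MonoidHom.comp_apply, zpowersHom_apply, Units.coeHom_apply, one_smul]
  norm_num

def φ : R →+* PS :=
  Polynomial.eval₂RingHom (φ₁.toRingHom) (PowerSeries.C sK * PowerSeries.X)

lemma φ_x : φ x = 1 - PowerSeries.X := by
  have : φ x = φ₁ (LaurentPolynomial.T 1) := by simp [φ, x]
  rw [this, φ₁_T]; norm_num [U_val]

lemma φ_y : φ y = PowerSeries.C sK * PowerSeries.X := by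
  simp [φ, y]

lemma φ_u : φ (1 - x) = PowerSeries.X := by
  rw [map_sub, map_one, φ_x]; ring

lemma cc_U : PowerSeries.constantCoeff (U : PS) = 1 := by
  rw [U_val]; simp

lemma cc_Uinv : PowerSeries.constantCoeff ((U⁻¹ : PSˣ) : PS) = 1 := by
  have h : PowerSeries.constantCoeff ((U : PS) * ((U⁻¹ : PSˣ) : PS)) = 1 := by
    rw [Units.mul_inv]; simp
  rw [map_mul, cc_U, one_mul] at h; exact h


lemma gen_lemma (S : Subalgebra ℂ R) (hx : x ∈ S)
    (hxinv : Polynomial.C (LaurentPolynomial.T (-1)) ∈ S) (hy : y ∈ S) (g : R) : g ∈ S := by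
  induction g using Polynomial.induction_on with
  | C a =>
      induction a using LaurentPolynomial.induction_on with
      | h_C c =>
          have : (Polynomial.C (LaurentPolynomial.C c) : R) = algebraMap ℂ R c := rfl
          rw [this]; exact S.algebraMap_mem c
      | h_add hp hq => rw [map_add]; exact S.add_mem hp hq
      | h_C_mul_T n a ih =>
          have : (Polynomial.C (LaurentPolynomial.C a * LaurentPolynomial.T ((n:ℤ) + 1)) : R)
              = Polynomial.C (LaurentPolynomial.C a * LaurentPolynomial.T n) * x := by
            rw [x, ← map_mul, LaurentPolynomial.T_add, mul_assoc]
          rw [this]; exact S.mul_mem ih hx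
      | h_C_mul_T_Z n a ih =>
          have : (Polynomial.C (LaurentPolynomial.C a * LaurentPolynomial.T (-(n:ℤ) - 1)) : R)
              = Polynomial.C (LaurentPolynomial.C a * LaurentPolynomial.T (-n)) *
                Polynomial.C (LaurentPolynomial.T (-1)) := by
            rw [← map_mul, mul_assoc, ← LaurentPolynomial.T_add]
            ring_nf
          rw [this]; exact S.mul_mem ih hxinv
  | add p q hp hq => exact S.add_mem hp hq
  | monomial n a ih =>
      have : (Polynomial.C a * Polynomial.X ^ (n+1) : R)
          = (Polynomial.C a * Polynomial.X ^ n) * y := by rw [y]; ring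
      rw [this]; exact S.mul_mem ih hy


def mm : Ideal R := Ideal.span {1 - x, y}

lemma u_mem : (1 - x) ∈ mm := Ideal.subset_span (by simp)
lemma y_mem : y ∈ mm := Ideal.subset_span (by simp)

def Sc : Subalgebra ℂ R where
  carrier := {g | ∃ c : ℂ, PowerSeries.constantCoeff (φ g) = algebraMap ℂ KK c ∧
    g - algebraMap ℂ R c ∈ mm}
  mul_mem' := by
    rintro g h ⟨c₁, hc₁, hg⟩ ⟨c₂, hc₂, hh⟩
    refine ⟨c₁ * c₂, ?_, ?_⟩
    · rw [map_mul, map_mul, hc₁, hc₂, map_mul]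
    · have : g * h - algebraMap ℂ R (c₁ * c₂)
          = g * (h - algebraMap ℂ R c₂) + (g - algebraMap ℂ R c₁) * algebraMap ℂ R c₂ := by
        rw [map_mul]; ring
      rw [this]
      exact mm.add_mem (mm.mul_mem_left _ hh) (mm.mul_mem_right _ hg)
  add_mem' := by
    rintro g h ⟨c₁, hc₁, hg⟩ ⟨c₂, hc₂, hh⟩
    refine ⟨c₁ + c₂, by rw [map_add, map_add, hc₁, hc₂, map_add], ?_⟩
    have : g + h - algebraMap ℂ R (c₁ + c₂)
        = (g - algebraMap ℂ R c₁) + (h - algebraMap ℂ R c₂) := by rw [map_add]; ring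
    rw [this]; exact mm.add_mem hg hh
  one_mem' := ⟨1, by simp, by simp⟩
  zero_mem' := ⟨0, by simp, by simp⟩
  algebraMap_mem' := by
    intro c
    refine ⟨c, ?_, by simp⟩
    have h1 : (algebraMap ℂ R c : R) = Polynomial.C (LaurentPolynomial.C c) := rfl
    have h2 : φ (Polynomial.C (LaurentPolynomial.C c)) = φ₁ (LaurentPolynomial.C c) := by
      simp [φ]
    have h3 : (LaurentPolynomial.C c : LaurentPolynomial ℂ) = algebraMap ℂ _ c := rfl
    rw [h1, h2, h3, AlgHom.commutes]
    have : (algebraMap ℂ PS c) = PowerSeries.C (algebraMap ℂ KK c) := by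
      rw [IsScalarTower.algebraMap_apply ℂ KK PS]; rfl
    rw [this]; simp

lemma lemC (g : R) : ∃ c : ℂ, PowerSeries.constantCoeff (φ g) = algebraMap ℂ KK c ∧
    g - algebraMap ℂ R c ∈ mm := by
  refine gen_lemma Sc ?_ ?_ ?_ g
  · refine ⟨1, ?_, ?_⟩
    · rw [φ_x]; simp
    · have : x - algebraMap ℂ R 1 = -(1 - x) := by rw [map_one]; ring
      rw [this]; exact mm.neg_mem u_mem
  · refine ⟨1, ?_, ?_⟩
    · have h2 : φ (Polynomial.C (LaurentPolynomial.T (-1))) = φ₁ (LaurentPolynomial.T (-1)) := by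
        simp [φ]
      rw [h2, φ₁_T]
      have : (U ^ (-1 : ℤ)) = U⁻¹ := by simp
      rw [this, cc_Uinv]; simp
    · have key : Polynomial.C (LaurentPolynomial.T (-1)) - algebraMap ℂ R 1
          = Polynomial.C (LaurentPolynomial.T (-1)) * (1 - x) := by
        rw [map_one, mul_sub, mul_one, x, ← map_mul, ← LaurentPolynomial.T_add]
        norm_num
      rw [key]; exact mm.mul_mem_left _ u_mem
  · refine ⟨0, ?_, ?_⟩
    · rw [φ_y]; simp
    · rw [map_zero, sub_zero]; exact y_mem


lemma lemD (N : ℕ) (c : ℕ → ℂ)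
    (h : ∑ i ∈ Finset.range (N + 1), algebraMap ℂ KK (c i) * sK ^ (N - i) = 0) :
    ∀ i ∈ Finset.range (N + 1), c i = 0 := by
  have h2 : ∑ j ∈ Finset.range (N + 1), algebraMap ℂ KK (c (N - j)) * sK ^ j = 0 := by
    rw [← h, ← Finset.sum_range_reflect]
    apply Finset.sum_congr rfl
    intro j hj
    simp only [Finset.mem_range] at hj
    have hj' : j ≤ N := by omega
    have e1 : N + 1 - 1 - j = N - j := by omega
    rw [e1, Nat.sub_sub_self hj']
  set q : Polynomial ℂ := ∑ j ∈ Finset.range (N + 1), Polynomial.C (c (N - j)) * Polynomial.X ^ j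
    with hq
  have hmap : algebraMap (Polynomial ℂ) KK q = 0 := by
    rw [hq, map_sum, ← h2]
    apply Finset.sum_congr rfl
    intro j _
    rw [map_mul, map_pow, RatFunc.algebraMap_C, RatFunc.algebraMap_X]
    rfl
  have hinj : Function.Injective (algebraMap (Polynomial ℂ) KK) := RatFunc.algebraMap_injective ℂ
  have hq0 : q = 0 := hinj (by rw [hmap, map_zero])
  intro i hi
  simp only [Finset.mem_range] at hi
  have key : q.coeff (N - i) = c (N - (N - i)) := by
    rw [hq, Polynomial.finset_sum_coeff]
    rw [Finset.sum_eq_single (N - i)]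
    · simp
    · intro b _ hb
      rw [Polynomial.coeff_C_mul, Polynomial.coeff_X_pow, if_neg (Ne.symm hb), mul_zero]
    · intro hmem; exact absurd (Finset.mem_range.2 (by omega)) hmem
  rw [hq0] at key
  simp only [Polynomial.coeff_zero] at key
  have key2 : c (N - (N - i)) = 0 := key.symm
  rwa [Nat.sub_sub_self (by omega : i ≤ N)] at key2


lemma rep_lemma (d : ℕ) : ∀ r : R, r ∈ mm ^ d →
    ∃ g : ℕ → R, r = ∑ i ∈ Finset.range (d+1), g i * ((1-x)^i * y^(d-i)) := by
  induction d with
  | zero => intro r _; exact ⟨fun _ => r, by simp⟩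
  | succ d ih =>
    intro r hr
    have hr2 : r ∈ mm ^ d * mm := (pow_succ mm d) ▸ hr
    refine Submodule.mul_induction_on hr2 ?_ ?_
    · intro a ha b hb
      obtain ⟨g, hg⟩ := ih a ha
      rw [mm, Ideal.mem_span_pair] at hb
      obtain ⟨p, q, hpq⟩ := hb
      refine ⟨fun i => (if i = 0 then 0 else g (i-1) * p) + (if i = d+1 then 0 else g i * q), ?_⟩
      have claim1 : (∑ i ∈ Finset.range (d+2),
            (if i = 0 then (0:R) else g (i-1) * p) * ((1-x)^i * y^(d+1-i)))
          = ∑ i ∈ Finset.range (d+1), g i * p * ((1-x)^(i+1) * y^(d-i)) := by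
        rw [Finset.sum_range_succ']
        have step : ∀ i ∈ Finset.range (d+1),
            (if i+1 = 0 then (0:R) else g (i+1-1) * p) * ((1-x)^(i+1) * y^(d+1-(i+1)))
            = g i * p * ((1-x)^(i+1) * y^(d-i)) := by
          intro i _
          rw [if_neg (Nat.succ_ne_zero i), Nat.add_sub_cancel, Nat.succ_sub_succ]
        rw [Finset.sum_congr rfl step, if_pos rfl, zero_mul, add_zero]
      have claim2 : (∑ i ∈ Finset.range (d+2),
            (if i = d+1 then (0:R) else g i * q) * ((1-x)^i * y^(d+1-i)))
          = ∑ i ∈ Finset.range (d+1), g i * q * ((1-x)^i * y^(d+1-i)) := by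
        rw [Finset.sum_range_succ]
        have step : ∀ i ∈ Finset.range (d+1),
            (if i = d+1 then (0:R) else g i * q) * ((1-x)^i * y^(d+1-i))
            = g i * q * ((1-x)^i * y^(d+1-i)) := by
          intro i hi
          simp only [Finset.mem_range] at hi
          rw [if_neg (by omega)]
        rw [Finset.sum_congr rfl step, if_pos rfl, zero_mul, add_zero]
      simp only [add_mul]
      rw [Finset.sum_add_distrib, claim1, claim2, hg, ← hpq, Finset.sum_mul,
        ← Finset.sum_add_distrib]
      apply Finset.sum_congr rfl
      intro i hi
      simp only [Finset.mem_range] at hi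
      have e2 : d + 1 - i = (d - i) + 1 := by omega
      rw [e2, pow_succ]
      ring
    · rintro r1 r2 ⟨g1, hg1⟩ ⟨g2, hg2⟩
      refine ⟨fun i => g1 i + g2 i, ?_⟩
      rw [hg1, hg2, ← Finset.sum_add_distrib]
      apply Finset.sum_congr rfl
      intros; ring


lemma mono_mem (i j : ℕ) : (1-x)^i * y^j ∈ mm ^ (i + j) := by
  have e : mm ^ (i + j) = mm ^ i * mm ^ j := pow_add mm i j
  rw [e]
  exact Ideal.mul_mem_mul (Ideal.pow_mem_pow u_mem i) (Ideal.pow_mem_pow y_mem j)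

lemma lemB (d : ℕ) : ∀ r : R, (∀ k < d, PowerSeries.coeff k (φ r) = 0) → r ∈ mm ^ d := by
  induction d with
  | zero =>
      intro r _
      have e : mm ^ (0:ℕ) = ⊤ := (pow_zero mm).trans Ideal.one_eq_top
      exact e ▸ Submodule.mem_top
  | succ d ih =>
    intro r hcoeff
    have hrd : r ∈ mm ^ d := ih r (fun k hk => hcoeff k (by omega))
    obtain ⟨g, hg⟩ := rep_lemma d r hrd
    choose c hc1 hc2 using fun i => lemC (g i)
    have hφr : φ r = ∑ i ∈ Finset.range (d+1),
        (φ (g i) * PowerSeries.C (sK ^ (d-i))) * PowerSeries.X ^ d := by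
      rw [hg, map_sum]
      apply Finset.sum_congr rfl
      intro i hi
      simp only [Finset.mem_range] at hi
      rw [map_mul, map_mul, map_pow, map_pow, φ_u, φ_y, mul_pow, ← map_pow]
      have e1 : (PowerSeries.X : PS) ^ i * (PowerSeries.C (sK ^ (d-i)) * PowerSeries.X ^ (d-i))
          = PowerSeries.C (sK ^ (d-i)) * (PowerSeries.X ^ i * PowerSeries.X ^ (d-i)) := by
        ring
      have e2 : (PowerSeries.X : PS) ^ i * PowerSeries.X ^ (d - i) = PowerSeries.X ^ d := by
        rw [← pow_add]
        congr 1
        omega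
      rw [mul_assoc, e1, e2]
    have hcd : ∑ i ∈ Finset.range (d+1), algebraMap ℂ KK (c i) * sK ^ (d-i) = 0 := by
      have h0 := hcoeff d (by omega)
      rw [hφr, map_sum] at h0
      rw [← h0]
      apply Finset.sum_congr rfl
      intro i _
      have e0 : PowerSeries.coeff d ((φ (g i) * PowerSeries.C (sK ^ (d-i)))
          * PowerSeries.X ^ d)
          = PowerSeries.coeff 0 (φ (g i) * PowerSeries.C (sK ^ (d-i))) := by
        have h3 := PowerSeries.coeff_mul_X_pow (φ (g i) * PowerSeries.C (sK ^ (d-i))) d 0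
        rw [zero_add] at h3
        exact h3
      rw [e0, PowerSeries.coeff_zero_eq_constantCoeff, map_mul, hc1 i,
        PowerSeries.constantCoeff_C]
    have hc0 : ∀ i ∈ Finset.range (d+1), c i = 0 := lemD d c hcd
    have hgm : ∀ i ∈ Finset.range (d+1), g i ∈ mm := by
      intro i hi
      have h4 := hc2 i
      rwa [hc0 i hi, map_zero, sub_zero] at h4
    have hmem : r ∈ mm * mm ^ d := by
      rw [hg]
      apply Submodule.sum_mem
      intro i hi
      have h5 : (1-x)^i * y^(d-i) ∈ mm ^ d := by
        have h6 := mono_mem i (d - i)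
        have e : i + (d - i) = d := by
          simp only [Finset.mem_range] at hi
          omega
        rwa [e] at h6
      exact Ideal.mul_mem_mul (hgm i hi) h5
    have e7 : mm * mm ^ d = mm ^ (d + 1) := (pow_succ' mm d).symm
    exact e7 ▸ hmem


lemma dvd_of_mem_pow (k : ℕ) (z : R) (hz : z ∈ mm ^ k) : (PowerSeries.X : PS) ^ k ∣ φ z := by
  have h1 : φ z ∈ Ideal.map φ (mm ^ k) := Ideal.mem_map_of_mem φ hz
  have h2 : Ideal.map φ (mm ^ k) = (Ideal.map φ mm) ^ k := Ideal.map_pow (I := mm) φ k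
  have h3 : Ideal.map φ mm ≤ Ideal.span {(PowerSeries.X : PS)} := by
    rw [mm, Ideal.map_span]
    apply Ideal.span_le.2
    rintro t ⟨w, hw, rfl⟩
    simp only [Set.mem_insert_iff, Set.mem_singleton_iff] at hw
    rcases hw with rfl | rfl
    · rw [φ_u]; exact Ideal.subset_span rfl
    · rw [φ_y]
      exact Ideal.mem_span_singleton.2 ⟨PowerSeries.C sK, mul_comm _ _⟩
  have h4 : (Ideal.map φ mm) ^ k ≤ (Ideal.span {(PowerSeries.X : PS)}) ^ k :=
    Ideal.pow_right_mono h3 k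
  have h5 : (Ideal.span {(PowerSeries.X : PS)}) ^ k
      = Ideal.span {(PowerSeries.X : PS) ^ k} := Ideal.span_singleton_pow _ k
  have h6 : φ z ∈ Ideal.span {(PowerSeries.X : PS) ^ k} := by
    rw [← h5]
    exact h4 (h2 ▸ h1)
  exact Ideal.mem_span_singleton.1 h6


/-- In `ℂ[x^{±1},y]`, every power `⟨1-x, y⟩^d` of the complete-intersection ideal
`⟨1-x, y⟩` is integrally closed: if `r` satisfies an equation
`r^n + a₁ r^{n-1} + ⋯ + a_n = 0` with `aᵢ ∈ (⟨1-x,y⟩^d)^i`, then `r ∈ ⟨1-x,y⟩^d`. -/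
theorem power_ideal_integrally_closed (d : ℕ) (r : R)
    (h : ∃ (n : ℕ) (a : ℕ → R), 0 < n ∧
      (∀ i ∈ Finset.Icc 1 n, a i ∈ ((Ideal.span {1 - x, y} : Ideal R) ^ d) ^ i) ∧
      r ^ n + ∑ i ∈ Finset.Icc 1 n, a i * r ^ (n - i) = 0) :
    r ∈ (Ideal.span {1 - x, y} : Ideal R) ^ d := by
  classical
  obtain ⟨n, a, hn, ha, heq⟩ := h
  show r ∈ mm ^ d
  apply lemB d r
  intro k hkd
  by_contra hk0
  -- pick e minimal with coeff e (φ r) ≠ 0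
  have hex : ∃ m, PowerSeries.coeff m (φ r) ≠ 0 := ⟨k, hk0⟩
  obtain ⟨e, he, hmin, hed⟩ : ∃ e, PowerSeries.coeff e (φ r) ≠ 0 ∧
      (∀ m < e, PowerSeries.coeff m (φ r) = 0) ∧ e < d := by
    refine ⟨Nat.find hex, Nat.find_spec hex, ?_, ?_⟩
    · intro m hm
      by_contra hmne
      exact absurd hm (not_lt.2 (Nat.find_le hmne))
    · exact lt_of_le_of_lt (Nat.find_le hk0) hkd
  obtain ⟨g, hfg⟩ : ∃ g : PS, φ r = PowerSeries.X ^ e * g :=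
    (PowerSeries.X_pow_dvd_iff.2 hmin).elim (fun g hg => ⟨g, hg⟩)
  have hcg : PowerSeries.constantCoeff g ≠ 0 := by
    intro h0
    apply he
    rw [hfg]
    have := PowerSeries.coeff_X_pow_mul g e 0
    rw [zero_add] at this
    rw [this, PowerSeries.coeff_zero_eq_constantCoeff, h0]
  -- image of the integral equation
  have heqφ : (φ r) ^ n + ∑ i ∈ Finset.Icc 1 n, φ (a i) * (φ r) ^ (n - i) = 0 := by
    have := congrArg φ heq
    rw [map_zero, map_add, map_pow, map_sum] at this
    rw [← this]
    congr 1
    apply Finset.sum_congr rfl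
    intro i _
    rw [map_mul, map_pow]
  -- divisibility of each summand
  have hdvd : (PowerSeries.X : PS) ^ (n * e + 1) ∣ (φ r) ^ n := by
    have hsum : (PowerSeries.X : PS) ^ (n * e + 1) ∣
        ∑ i ∈ Finset.Icc 1 n, φ (a i) * (φ r) ^ (n - i) := by
      apply Finset.dvd_sum
      intro i hi
      simp only [Finset.mem_Icc] at hi
      have hai : a i ∈ mm ^ (d * i) := by
        have e1 : mm ^ (d * i) = (mm ^ d) ^ i := pow_mul mm d i
        rw [e1]
        exact ha i (Finset.mem_Icc.2 hi)
      have hd1 : (PowerSeries.X : PS) ^ (d * i) ∣ φ (a i) := dvd_of_mem_pow _ _ hai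
      have hd2 : (PowerSeries.X : PS) ^ (e * (n - i)) ∣ (φ r) ^ (n - i) := by
        rw [hfg, mul_pow, ← pow_mul]
        exact Dvd.intro _ rfl
      have harith : n * e + 1 ≤ d * i + e * (n - i) := by
        have h1 : e * (n - i) + e * i = e * n := by
          rw [← Nat.mul_add]
          congr 1
          omega
        have h2 : (e + 1) * i ≤ d * i := Nat.mul_le_mul_right i (by omega)
        have h3 : (e + 1) * i = e * i + i := by ring
        have h4 : n * e = e * n := Nat.mul_comm n e
        omega
      calc (PowerSeries.X : PS) ^ (n * e + 1) ∣
          (PowerSeries.X : PS) ^ (d * i + e * (n - i)) := pow_dvd_pow _ harith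
        _ = (PowerSeries.X : PS) ^ (d * i) * (PowerSeries.X : PS) ^ (e * (n - i)) := pow_add _ _ _
        _ ∣ φ (a i) * (φ r) ^ (n - i) := mul_dvd_mul hd1 hd2
    have hneg : (φ r) ^ n = -∑ i ∈ Finset.Icc 1 n, φ (a i) * (φ r) ^ (n - i) := by
      linear_combination heqφ
    rw [hneg]
    exact hsum.neg_right
  -- contradiction via coefficient n*e
  have hc0 : PowerSeries.coeff (n * e) ((φ r) ^ n) = 0 :=
    PowerSeries.X_pow_dvd_iff.1 hdvd (n * e) (by omega)
  have hcne : PowerSeries.coeff (n * e) ((φ r) ^ n) ≠ 0 := by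
    rw [hfg, mul_pow, ← pow_mul]
    have e2 : n * e = e * n := Nat.mul_comm n e
    rw [e2]
    have := PowerSeries.coeff_X_pow_mul (g ^ n) (e * n) 0
    rw [zero_add] at this
    rw [this, PowerSeries.coeff_zero_eq_constantCoeff, map_pow]
    exact pow_ne_zero n hcg
  exact hcne hc0


end
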